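/- Let V be a complex Hilbert space and M a set of continuous ℂ-linear operators on V closed under adjoints, such that (M,V) is a Schur system. Assume there exists a surjective conjugate-linear isometry of V commuting with every element of M, but no conjugate-linear isometric involution of V commuting with every element of M (the system is C-pseudoreal). Then the real algebra of all continuous ℝ-linear operators on the realification of V commuting with every element of M is isomorphic, as an ℝ-algebra, to the quaternions ℍ. -/

import Mathlib

set_option maxHeartbeats 1000000
set_option synthInstance.maxHeartbeats 200000

open ContinuousLinearMap

section Aux

variable {V : Type*} [NormedAddCommGroup V] [InnerProductSpace ℂ V]

theorem my_smul_decomp (a : ℂ) (x : V) : a • x = a.re • x + a.im • (Complex.I • x) := by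
  conv_lhs => rw [← Complex.re_add_im a]
  rw [add_smul, mul_smul, Complex.coe_smul, Complex.coe_smul]

/-- Upgrade a real-linear continuous map commuting with `I` to a complex-linear map. -/
noncomputable def myToCLC (P : V →L[ℝ] V) (h : ∀ x, P (Complex.I • x) = Complex.I • P x) : V →L[ℂ] V where
  toFun := P
  map_add' := map_add P
  map_smul' a x := by
    simp only [RingHom.id_apply]
    rw [my_smul_decomp a x, map_add, map_smul, map_smul, h, my_smul_decomp a (P x)]
  cont := P.cont

@[simp] theorem myToCLC_apply (P : V →L[ℝ] V) (h) (x : V) : myToCLC P h x = P x := rfl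

/-- Build a continuous real-linear map from a conjugate-linear isometry. -/
noncomputable def myTheta (θ : V → V) (hadd : ∀ x y, θ (x + y) = θ x + θ y)
    (hsmul : ∀ (a : ℂ) (x : V), θ (a • x) = (starRingEnd ℂ a) • θ x)
    (hnorm : ∀ x, ‖θ x‖ = ‖x‖) : V →L[ℝ] V :=
  LinearMap.mkContinuous
    { toFun := θ
      map_add' := hadd
      map_smul' := fun r x => by
        have := hsmul (r : ℂ) x
        rw [Complex.coe_smul, Complex.conj_ofReal, Complex.coe_smul] at this
        simpa using this }
    1 (fun x => by simp [hnorm])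

@[simp] theorem myTheta_apply (θ : V → V) (h1 h2 h3) (x : V) : myTheta θ h1 h2 h3 x = θ x := rfl

variable [CompleteSpace V]

theorem myschurStar
    (M : Set (V →L[ℂ] V)) (hM : ∀ m ∈ M, ContinuousLinearMap.adjoint m ∈ M)
    (hSchur : ∀ N : V →L[ℂ] V,
      N ∘L ContinuousLinearMap.adjoint N = ContinuousLinearMap.adjoint N ∘L N →
      (∀ m ∈ M, N ∘L m = m ∘L N) →
      ∃ c : ℂ, N = c • ContinuousLinearMap.id ℂ V)
    (N : V →L[ℂ] V) (hc : ∀ m ∈ M, N ∘L m = m ∘L N) :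
    ∃ c : ℂ, N = c • ContinuousLinearMap.id ℂ V := by
  set Nd := ContinuousLinearMap.adjoint N with hNd
  have hcd : ∀ m ∈ M, Nd ∘L m = m ∘L Nd := by
    intro m hm
    have h1 := hc _ (hM m hm)
    have h2 := congrArg ContinuousLinearMap.adjoint h1
    simpa [ContinuousLinearMap.adjoint_comp, ContinuousLinearMap.adjoint_adjoint] using h2.symm
  have hSadj : ContinuousLinearMap.adjoint (N + Nd) = N + Nd := by
    rw [map_add, hNd, ContinuousLinearMap.adjoint_adjoint, add_comm]
  obtain ⟨a, ha⟩ := hSchur (N + Nd) (by rw [hSadj]) (fun m hm => by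
    rw [ContinuousLinearMap.add_comp, ContinuousLinearMap.comp_add, hc m hm, hcd m hm])
  have hDadj : ContinuousLinearMap.adjoint (Complex.I • (N - Nd)) = Complex.I • (N - Nd) := by
    rw [map_smulₛₗ, map_sub, hNd, ContinuousLinearMap.adjoint_adjoint]
    simp only [Complex.conj_I, neg_smul, smul_sub, neg_sub]
    abel
  obtain ⟨b, hb⟩ := hSchur (Complex.I • (N - Nd)) (by rw [hDadj]) (fun m hm => by
    rw [ContinuousLinearMap.smul_comp, ContinuousLinearMap.comp_smul,
      ContinuousLinearMap.sub_comp, ContinuousLinearMap.comp_sub, hc m hm, hcd m hm])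
  refine ⟨(a - Complex.I * b) / 2, ?_⟩
  have h2' : N - Nd = (-(Complex.I) * b) • ContinuousLinearMap.id ℂ V := by
    have h3 := congrArg (fun X => (-Complex.I : ℂ) • X) hb
    simpa [smul_smul, neg_mul, Complex.I_mul_I, neg_neg, one_smul] using h3
  have key : (2:ℂ) • N = (2 * ((a - Complex.I * b) / 2)) • ContinuousLinearMap.id ℂ V := by
    have : (2:ℂ) • N = (N + Nd) + (N - Nd) := by rw [two_smul]; abel
    rw [this, ha, h2', ← add_smul]
    ring_nf
  have hinj := smul_right_injective (V →L[ℂ] V) (two_ne_zero' ℂ)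
  refine hinj ?_
  show (2:ℂ) • N = (2:ℂ) • (((a - Complex.I * b) / 2) • ContinuousLinearMap.id ℂ V)
  rw [key, smul_smul]

end Aux

/-- For a C-pseudoreal Schur system `(M,V)` (an anti-unitary operator
commuting with `M` exists, but no conjugate-linear isometric involution does), the real
algebra of all continuous `ℝ`-linear operators on the realification of `V` commuting with
every element of `M` is isomorphic, as an `ℝ`-algebra, to the quaternions `ℍ`. -/
theorem cpseudoreal_schur_commutant_quaternionic
    {V : Type*} [NormedAddCommGroup V] [InnerProductSpace ℂ V] [CompleteSpace V]
    (M : Set (V →L[ℂ] V)) (hM : ∀ m ∈ M, ContinuousLinearMap.adjoint m ∈ M)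
    (hSchur : ∀ N : V →L[ℂ] V,
      N ∘L ContinuousLinearMap.adjoint N = ContinuousLinearMap.adjoint N ∘L N →
      (∀ m ∈ M, N ∘L m = m ∘L N) →
      ∃ c : ℂ, N = c • ContinuousLinearMap.id ℂ V)
    (hanti : ∃ θ : V → V, Function.Surjective θ ∧
      (∀ x y, θ (x + y) = θ x + θ y) ∧
      (∀ (a : ℂ) (x : V), θ (a • x) = (starRingEnd ℂ a) • θ x) ∧
      (∀ x, ‖θ x‖ = ‖x‖) ∧
      (∀ m ∈ M, ∀ x, θ (m x) = m (θ x)))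
    (hnoconj : ¬ ∃ θ : V → V, Function.Surjective θ ∧
      (∀ x y, θ (x + y) = θ x + θ y) ∧
      (∀ (a : ℂ) (x : V), θ (a • x) = (starRingEnd ℂ a) • θ x) ∧
      (∀ x, ‖θ x‖ = ‖x‖) ∧
      (∀ x, θ (θ x) = x) ∧
      (∀ m ∈ M, ∀ x, θ (m x) = m (θ x))) :
    Nonempty
      ((Subalgebra.centralizer ℝ
        ((fun m : V →L[ℂ] V => m.restrictScalars ℝ) '' M) : Subalgebra ℝ (V →L[ℝ] V))
        ≃ₐ[ℝ] Quaternion ℝ) := by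
  obtain ⟨θ, hsurj, hadd, hsmul, hnorm, hcommθ⟩ := hanti
  -- V is nontrivial
  have hnt : Nontrivial V := by
    by_contra h
    rw [not_nontrivial_iff_subsingleton] at h
    exact hnoconj ⟨id, Function.surjective_id,
      fun _ _ => Subsingleton.elim _ _, fun _ _ => Subsingleton.elim _ _,
      fun _ => rfl, fun _ => Subsingleton.elim _ _, fun _ _ _ => Subsingleton.elim _ _⟩
  obtain ⟨x0, hx0⟩ := exists_ne (0 : V)
  set A := (Subalgebra.centralizer ℝ
      ((fun m : V →L[ℂ] V => m.restrictScalars ℝ) '' M) : Subalgebra ℝ (V →L[ℝ] V)) with hA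
  -- membership criterion
  have hmem : ∀ T : V →L[ℝ] V, T ∈ A ↔ (∀ m ∈ M, ∀ x, m (T x) = T (m x)) := by
    intro T
    rw [hA, Subalgebra.mem_centralizer_iff]
    constructor
    · intro h m hm x
      have := h (m.restrictScalars ℝ) ⟨m, hm, rfl⟩
      exact DFunLike.congr_fun this x
    · intro h g hg
      obtain ⟨m, hm, rfl⟩ := hg
      exact ContinuousLinearMap.ext fun x => h m hm x
  -- the two basic anti-commuting elements
  set Θ : V →L[ℝ] V := myTheta θ hadd hsmul hnorm with hΘdef
  set Iop : V →L[ℝ] V := (Complex.I • ContinuousLinearMap.id ℂ V).restrictScalars ℝ with hIdef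
  have hIop_apply : ∀ x, Iop x = Complex.I • x := fun x => rfl
  have hΘ_apply : ∀ x, Θ x = θ x := fun x => rfl
  have hθI : ∀ x, θ (Complex.I • x) = -(Complex.I • θ x) := by
    intro x
    rw [hsmul, Complex.conj_I, neg_smul]
  -- θ ∘ θ = -id
  have hθθsmul : ∀ x, (Θ.comp Θ) (Complex.I • x) = Complex.I • (Θ.comp Θ) x := by
    intro x
    show θ (θ (Complex.I • x)) = Complex.I • θ (θ x)
    rw [hθI, show θ (-(Complex.I • θ x)) = -(θ (Complex.I • θ x)) from map_neg Θ _, hθI,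
      neg_neg]
  obtain ⟨c, hcS⟩ := myschurStar M hM hSchur (myToCLC (Θ.comp Θ) hθθsmul) (by
    intro m hm
    ext x
    simp only [ContinuousLinearMap.comp_apply, myToCLC_apply, ContinuousLinearMap.comp_apply,
      hΘ_apply]
    rw [← hcommθ m hm, ← hcommθ m hm])
  have hθθ : ∀ x, θ (θ x) = c • x := by
    intro x
    have := DFunLike.congr_fun hcS x
    simp at this
    exact this
  have hθx0 : θ x0 ≠ 0 := by
    intro h
    apply hx0
    have := hnorm x0
    rw [h, norm_zero] at this
    exact norm_eq_zero.mp this.symm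
  have hcnorm : ‖c‖ = 1 := by
    have h1 : ‖θ (θ x0)‖ = ‖x0‖ := by rw [hnorm, hnorm]
    rw [hθθ, norm_smul] at h1
    have hx0n : ‖x0‖ ≠ 0 := norm_ne_zero_iff.mpr hx0
    field_simp at h1
    exact h1
  have hcreal : (starRingEnd ℂ) c = c := by
    have h1 : θ (θ (θ x0)) = (starRingEnd ℂ c) • θ x0 := by rw [hθθ x0, hsmul]
    have h2 : θ (θ (θ x0)) = c • θ x0 := hθθ (θ x0)
    have h3 : ((starRingEnd ℂ c) - c) • θ x0 = 0 := by
      rw [sub_smul, h1.symm.trans h2, sub_self]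
    rcases smul_eq_zero.mp h3 with h | h
    · exact sub_eq_zero.mp h
    · exact absurd h hθx0
  have hcm1 : c = -1 := by
    have hre : c = (c.re : ℂ) := (Complex.conj_eq_iff_re.mp hcreal).symm
    have habs : |c.re| = 1 := by
      have := hcnorm
      rw [hre] at this
      simpa using this
    rcases abs_eq (by norm_num : (0:ℝ) ≤ 1) |>.mp habs with h | h
    · exfalso
      apply hnoconj
      refine ⟨θ, hsurj, hadd, hsmul, hnorm, fun x => ?_, hcommθ⟩
      rw [hθθ, hre, h]
      simp
    · rw [hre, h]
      norm_num
  have hinv : ∀ x, θ (θ x) = -x := by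
    intro x
    rw [hθθ, hcm1]
    simp
  -- membership of the generators
  have hImem : Iop ∈ A := (hmem Iop).mpr (fun m _ x => by
    simp only [hIop_apply]
    exact (map_smul m Complex.I x))
  have hΘmem : Θ ∈ A := (hmem Θ).mpr (fun m hm x => by
    simp only [hΘ_apply]
    exact (hcommθ m hm x).symm)
  -- quaternion basis
  have hnA : Nontrivial A := by
    refine nontrivial_of_ne 1 0 fun h => hx0 ?_
    have h1 := congrArg Subtype.val h
    have := DFunLike.congr_fun (h1 : (1 : V →L[ℝ] V) = 0) x0
    simpa using this
  let basis : QuaternionAlgebra.Basis A (-1 : ℝ) 0 (-1) :=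
    { i := ⟨Iop, hImem⟩
      j := ⟨Θ, hΘmem⟩
      k := (⟨Iop, hImem⟩ : A) * (⟨Θ, hΘmem⟩ : A)
      i_mul_i := by
        rw [zero_smul, add_zero]
        refine Subtype.ext ?_
        refine ContinuousLinearMap.ext fun x => ?_
        show Iop (Iop x) = ((-1 : ℝ) • (1 : V →L[ℝ] V)) x
        rw [hIop_apply, hIop_apply, smul_smul, Complex.I_mul_I]
        simp
      j_mul_j := by
        refine Subtype.ext ?_
        refine ContinuousLinearMap.ext fun x => ?_
        show Θ (Θ x) = ((-1 : ℝ) • (1 : V →L[ℝ] V)) x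
        rw [hΘ_apply, hΘ_apply, hinv]
        simp
      i_mul_j := rfl
      j_mul_i := by
        rw [zero_smul, zero_sub]
        refine Subtype.ext ?_
        refine ContinuousLinearMap.ext fun x => ?_
        show Θ (Iop x) = -(Iop (Θ x))
        simp only [hΘ_apply, hIop_apply, hθI] }
  let φ : Quaternion ℝ →ₐ[ℝ] A := basis.liftHom
  have hinjφ : Function.Injective φ := by
    have : Function.Injective (φ : Quaternion ℝ →+* A) := RingHom.injective _
    exact this
  have hsurjφ : Function.Surjective φ := by
    rintro ⟨Tv, hT⟩
    have hTm : ∀ m ∈ M, ∀ x, m (Tv x) = Tv (m x) := (hmem Tv).mp hT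
    set Pr : V →L[ℝ] V := (2:ℝ)⁻¹ • (Tv - Iop.comp (Tv.comp Iop)) with hPrdef
    set Qr : V →L[ℝ] V := (2:ℝ)⁻¹ • (Tv + Iop.comp (Tv.comp Iop)) with hQrdef
    have hPr_apply : ∀ x, Pr x = (2:ℝ)⁻¹ • (Tv x - Complex.I • Tv (Complex.I • x)) := by
      intro x
      simp [hPrdef, hIop_apply]
    have hQr_apply : ∀ x, Qr x = (2:ℝ)⁻¹ • (Tv x + Complex.I • Tv (Complex.I • x)) := by
      intro x
      simp [hQrdef, hIop_apply]
    have hII : ∀ y : V, Complex.I • Complex.I • y = -y := by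
      intro y
      rw [smul_smul, Complex.I_mul_I, neg_one_smul]
    have hPI : ∀ x, Pr (Complex.I • x) = Complex.I • Pr x := by
      intro x
      rw [hPr_apply, hPr_apply, hII, map_neg]
      match_scalars <;> (ring_nf; try simp [Complex.I_sq]) <;> try ring
    have hQI : ∀ x, Qr (Complex.I • x) = -(Complex.I • Qr x) := by
      intro x
      rw [hQr_apply, hQr_apply, hII, map_neg]
      match_scalars <;> (ring_nf; try simp [Complex.I_sq]) <;> try ring
    have hPm : ∀ m ∈ M, ∀ x, m (Pr x) = Pr (m x) := by
      intro m hm x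
      rw [hPr_apply, hPr_apply, m.map_smul_of_tower, map_sub, map_smul, hTm m hm,
        hTm m hm, map_smul]
    have hQm : ∀ m ∈ M, ∀ x, m (Qr x) = Qr (m x) := by
      intro m hm x
      rw [hQr_apply, hQr_apply, m.map_smul_of_tower, map_add, map_smul, hTm m hm,
        hTm m hm, map_smul]
    -- complex-linear part
    obtain ⟨c₁, hc₁⟩ := myschurStar M hM hSchur (myToCLC Pr hPI) (by
      intro m hm
      ext x
      simpa using (hPm m hm x).symm)
    have hP : ∀ x, Pr x = c₁ • x := by
      intro x
      have := DFunLike.congr_fun hc₁ x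
      simpa using this
    -- conjugate-linear part
    have hRI : ∀ x, (Qr.comp Θ) (Complex.I • x) = Complex.I • (Qr.comp Θ) x := by
      intro x
      simp only [ContinuousLinearMap.comp_apply, hΘ_apply]
      rw [hθI, show Qr (-(Complex.I • θ x)) = -(Qr (Complex.I • θ x)) from map_neg Qr _,
        hQI, neg_neg]
    obtain ⟨c₂, hc₂⟩ := myschurStar M hM hSchur (myToCLC (Qr.comp Θ) hRI) (by
      intro m hm
      ext x
      simp only [ContinuousLinearMap.comp_apply, myToCLC_apply, ContinuousLinearMap.comp_apply,
        hΘ_apply]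
      rw [hcommθ m hm, ← hQm m hm])
    have hR : ∀ x, Qr (θ x) = c₂ • x := by
      intro x
      have := DFunLike.congr_fun hc₂ x
      simp at this
      exact this
    have hQ : ∀ y, Qr y = -(c₂ • θ y) := by
      intro y
      have h1 : θ (-(θ y)) = y := by
        rw [show θ (-(θ y)) = Θ (-(Θ y)) from rfl, map_neg, hΘ_apply, hΘ_apply, hinv, neg_neg]
      calc Qr y = Qr (θ (-(θ y))) := by rw [h1]
        _ = c₂ • (-(θ y)) := hR _
        _ = -(c₂ • θ y) := smul_neg _ _
    have hTdecomp : ∀ x, Tv x = c₁ • x - c₂ • θ x := by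
      intro x
      have h1 : Pr x + Qr x = Tv x := by
        rw [hPr_apply, hQr_apply, smul_sub, smul_add]
        have h2 : ∀ u : V, (2:ℝ)⁻¹ • u + (2:ℝ)⁻¹ • u = u := by
          intro u
          rw [← add_smul]
          norm_num
        abel_nf
        rw [two_smul]
        rw [h2]
      rw [← h1, hP, hQ, sub_eq_add_neg]
    refine ⟨⟨c₁.re, c₁.im, -c₂.re, -c₂.im⟩, ?_⟩
    refine Subtype.ext ?_
    refine ContinuousLinearMap.ext fun x => ?_
    show ((φ ⟨c₁.re, c₁.im, -c₂.re, -c₂.im⟩ : A) : V →L[ℝ] V) x = Tv x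
    have hφval : ((φ ⟨c₁.re, c₁.im, -c₂.re, -c₂.im⟩ : A) : V →L[ℝ] V)
        = c₁.re • (1 : V →L[ℝ] V) + c₁.im • Iop + (-c₂.re) • Θ + (-c₂.im) • (Iop * Θ) := by
      show ((algebraMap ℝ A c₁.re + c₁.im • basis.i + (-c₂.re) • basis.j
          + (-c₂.im) • basis.k : A) : V →L[ℝ] V) = _
      simp only [Subalgebra.coe_add, SetLike.val_smul]
      norm_cast
    rw [hφval, hTdecomp]
    simp only [ContinuousLinearMap.add_apply, ContinuousLinearMap.smul_apply,
      ContinuousLinearMap.one_apply, ContinuousLinearMap.mul_apply, hIop_apply, hΘ_apply]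
    rw [my_smul_decomp c₁ x, my_smul_decomp c₂ (θ x)]
    module
  exact ⟨(AlgEquiv.ofBijective φ ⟨hinjφ, hsurjφ⟩).symm⟩
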